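/- Assume q is a power of an odd prime. Let l ∈ {0,…,m−1} and let a, b, c ∈ {0,…,r−1} be pairwise distinct with a + b = 2c. Index rows and columns of rm×rm matrices by the pairs (j,i) ordering the canonical family A. Then the symmetric rm×rm matrix M over F_{q^m} with entries M_{(l,a),(l,b)} = M_{(l,b),(l,a)} = 1, M_{(l,c),(l,c)} = −2, and all other entries zero, belongs to the matrix code of relations C_mat(A), and M has rank 3. -/

import Mathlib

open Matrix

/-- Componentwise (Schur) product of two vectors. -/
def schur {F : Type*} [Field F] {n : ℕ} (a b : Fin n → F) : Fin n → F :=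
  fun t => a t * b t

/-- The matrix code of quadratic relations associated with the ordered family `v`. -/
def Cmat {F : Type*} [Field F] {n : ℕ} {ι : Type*} [Fintype ι] [LinearOrder ι]
    (v : ι → Fin n → F) : Set (Matrix ι ι F) :=
  { M | ∃ c : ι → ι → F,
      (∑ i : ι, ∑ j : ι, (if i ≤ j then c i j • schur (v i) (v j) else 0)) = 0 ∧
      (∀ i j : ι, i < j → M i j = c i j ∧ M j i = c i j) ∧
      (∀ i : ι, M i i = 2 * c i i) }

/-- Linear order on the index pairs `(j,i)` of the canonical family. -/
noncomputable instance pairLO (m r : ℕ) : LinearOrder (Fin m × Fin r) :=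
  LinearOrder.lift' (fun p => finProdFinEquiv p) finProdFinEquiv.injective

section Aux

variable {F : Type*} [Field F] {n : ℕ} {ι : Type*} [Fintype ι]

/-- reconstruct the ite form of `M` from entrywise data -/
lemma M_ite_aux [DecidableEq ι] (u v w : ι)
    (M : Matrix ι ι F)
    (h1 : M u v = 1) (h1' : M v u = 1) (h3 : M w w = -2)
    (h0 : ∀ i j, ¬((i = u ∧ j = v) ∨ (i = v ∧ j = u) ∨ (i = w ∧ j = w)) → M i j = 0) :
    M = fun p p' => if (p = u ∧ p' = v) ∨ (p = v ∧ p' = u) then 1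
      else if p = w ∧ p' = w then (-2 : F) else 0 := by
  ext i j
  by_cases hc1 : (i = u ∧ j = v) ∨ (i = v ∧ j = u)
  · rw [if_pos hc1]
    rcases hc1 with ⟨rfl, rfl⟩ | ⟨rfl, rfl⟩
    exacts [h1, h1']
  · rw [if_neg hc1]
    by_cases hc2 : i = w ∧ j = w
    · rw [if_pos hc2]; obtain ⟨rfl, rfl⟩ := hc2; exact h3
    · rw [if_neg hc2]; exact h0 i j (by tauto)

set_option maxHeartbeats 2000000 in
lemma mem_Cmat_aux [LinearOrder ι] (A : ι → Fin n → F) (u v w : ι)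
    (huv : u ≠ v) (huw : u ≠ w) (hvw : v ≠ w)
    (hschur : schur (A u) (A v) = schur (A w) (A w))
    (M : Matrix ι ι F)
    (h1 : M u v = 1) (h1' : M v u = 1) (h3 : M w w = -2)
    (h0 : ∀ i j, ¬((i = u ∧ j = v) ∨ (i = v ∧ j = u) ∨ (i = w ∧ j = w)) → M i j = 0) :
    M ∈ Cmat A := by
  classical
  have hM := M_ite_aux u v w M h1 h1' h3 h0
  have hvu : schur (A v) (A u) = schur (A u) (A v) := by
    funext t; simp only [schur]; ring
  refine ⟨fun i j => if (i = u ∧ j = v) ∨ (i = v ∧ j = u) then 1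
    else if i = w ∧ j = w then -1 else 0, ?_, ?_, ?_⟩
  · have key : ∀ i j : ι,
        (if i ≤ j then
          (if (i = u ∧ j = v) ∨ (i = v ∧ j = u) then (1:F)
            else if i = w ∧ j = w then -1 else 0) • schur (A i) (A j) else 0)
        = (if j = v then (if i = u then (if u ≤ v then schur (A u) (A v) else 0) else 0) else 0)
        + (if j = u then (if i = v then (if v ≤ u then schur (A v) (A u) else 0) else 0) else 0)
        + (if j = w then (if i = w then (-1 : F) • schur (A w) (A w) else 0) else 0) := by
      clear hM hschur hvu
      intro i j
      by_cases c1 : i = u <;> by_cases c2 : i = v <;> by_cases c3 : i = w <;>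
        by_cases c4 : j = u <;> by_cases c5 : j = v <;> by_cases c6 : j = w <;>
        simp_all
    simp only [key, Finset.sum_add_distrib, Finset.sum_ite_eq', Finset.mem_univ, if_true]
    rw [hvu]
    have hone : ((-1 : F)) • schur (A w) (A w) = - schur (A u) (A v) := by
      rw [← hschur]; simp
    rw [hone]
    rcases le_total u v with h | h
    · rw [if_pos h, if_neg (fun h' => huv (le_antisymm h h'))]
      abel
    · rw [if_neg (fun h' => huv (le_antisymm h' h)), if_pos h]
      abel
  · intro i j hij
    have hne : i ≠ j := ne_of_lt hij
    rw [hM]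
    constructor
    · simp only []
      by_cases hc1 : (i = u ∧ j = v) ∨ (i = v ∧ j = u)
      · rw [if_pos hc1, if_pos hc1]
      · rw [if_neg hc1, if_neg hc1, if_neg, if_neg]
        · rintro ⟨rfl, rfl⟩; exact hne rfl
        · rintro ⟨rfl, rfl⟩; exact hne rfl
    · simp only []
      have hiff : ((j = u ∧ i = v) ∨ (j = v ∧ i = u)) ↔ ((i = u ∧ j = v) ∨ (i = v ∧ j = u)) := by
        tauto
      by_cases hc1 : (i = u ∧ j = v) ∨ (i = v ∧ j = u)
      · rw [if_pos (hiff.mpr hc1), if_pos hc1]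
      · rw [if_neg (fun h => hc1 (hiff.mp h)), if_neg hc1, if_neg, if_neg]
        · rintro ⟨rfl, rfl⟩; exact hne rfl
        · rintro ⟨rfl, rfl⟩; exact hne rfl
  · intro i
    rw [hM]
    simp only []
    have hc1 : ¬((i = u ∧ i = v) ∨ (i = v ∧ i = u)) := by
      rintro (⟨rfl, h⟩ | ⟨rfl, h⟩)
      · exact huv h
      · exact huv h.symm
    rw [if_neg hc1, if_neg hc1]
    by_cases hc3 : i = w
    · rw [if_pos ⟨hc3, hc3⟩, if_pos ⟨hc3, hc3⟩]; norm_num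
    · rw [if_neg (fun h => hc3 h.1), if_neg (fun h => hc3 h.1)]; ring

set_option maxHeartbeats 2000000 in
lemma rank_aux [DecidableEq ι] (u v w : ι)
    (huv : u ≠ v) (huw : u ≠ w) (hvw : v ≠ w) (h2 : (2 : F) ≠ 0)
    (M : Matrix ι ι F)
    (h1 : M u v = 1) (h1' : M v u = 1) (h3 : M w w = -2)
    (h0 : ∀ i j, ¬((i = u ∧ j = v) ∨ (i = v ∧ j = u) ∨ (i = w ∧ j = w)) → M i j = 0) :
    M.rank = 3 := by
  have hM := M_ite_aux u v w M h1 h1' h3 h0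
  set f : Fin 3 → ι := ![u, v, w] with hf
  set E : Matrix ι (Fin 3) F := fun i k => if i = f k then 1 else 0 with hE
  set N : Matrix (Fin 3) (Fin 3) F := !![0,1,0;1,0,0;0,0,-2] with hN
  have hMN : M = E * N * Eᵀ := by
    ext i j
    rw [hM]
    simp only [Matrix.mul_apply, Matrix.transpose_apply, Fin.sum_univ_three]
    simp only [hE, hN, hf]
    by_cases c1 : i = u <;> by_cases c2 : i = v <;> by_cases c3 : i = w <;>
      by_cases c4 : j = u <;> by_cases c5 : j = v <;> by_cases c6 : j = w <;>
      simp_all [Matrix.cons_val_zero, Matrix.cons_val_one, Matrix.head_cons,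
        Matrix.vecHead, Matrix.vecTail]
  have hNM : N = Eᵀ * M * E := by
    ext k k'
    simp only [Matrix.mul_apply, Matrix.transpose_apply, Finset.sum_mul]
    simp only [hE]
    simp only [ite_mul, mul_ite, one_mul, zero_mul, mul_zero, mul_one,
      Finset.sum_ite_eq', Finset.mem_univ, if_true]
    fin_cases k <;> fin_cases k' <;>
      simp [hM, hf, hN, huv, huw, hvw, Ne.symm huv, Ne.symm huw, Ne.symm hvw,
        Matrix.vecHead, Matrix.vecTail]
  have hNrank : N.rank = 3 := by
    have hdet : N.det = 2 := by
      simp [hN, Matrix.det_fin_three]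
    have hunit : IsUnit N := by
      rw [Matrix.isUnit_iff_isUnit_det, hdet]
      exact isUnit_iff_ne_zero.mpr h2
    rw [Matrix.rank_of_isUnit N hunit, Fintype.card_fin]
  have hle : M.rank ≤ 3 := by
    calc M.rank = (E * N * Eᵀ).rank := by rw [← hMN]
      _ ≤ (E * N).rank := Matrix.rank_mul_le_left _ _
      _ ≤ N.rank := Matrix.rank_mul_le_right _ _
      _ = 3 := hNrank
  have hge : 3 ≤ M.rank := by
    calc (3:ℕ) = N.rank := hNrank.symm
      _ = (Eᵀ * M * E).rank := by rw [← hNM]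
      _ ≤ (Eᵀ * M).rank := Matrix.rank_mul_le_left _ _
      _ ≤ M.rank := Matrix.rank_mul_le_right _ _
  omega

end Aux

set_option maxHeartbeats 1000000 in
/-- Let `q` be a power of an odd prime, `F` a field with `q^m` elements
and `A` the canonical family `a_{(j,i)} = (x^i y)^{q^j}` (assumed linearly independent).
If `l ∈ {0,…,m−1}` and `a,b,c ∈ {0,…,r−1}` are pairwise distinct with `a + b = 2c`,
then the symmetric matrix `M` with `M_{(l,a),(l,b)} = M_{(l,b),(l,a)} = 1`,
`M_{(l,c),(l,c)} = −2` and all other entries `0` belongs to `C_mat(A)` and has rank `3`. -/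
theorem cmat_rank_three_odd_char
    (q m r nn : ℕ) (hq : ∃ p e : ℕ, p.Prime ∧ Odd p ∧ 0 < e ∧ q = p ^ e)
    (hm : 0 < m) (hr : 0 < r) (hn : 0 < nn)
    (F : Type*) [Field F] [Fintype F] (hF : Fintype.card F = q ^ m)
    (x y : Fin nn → F) (hx : Function.Injective x) (hy : ∀ t, y t ≠ 0)
    (A : Fin m × Fin r → Fin nn → F)
    (hA : A = fun p t => (x t ^ (p.2 : ℕ) * y t) ^ q ^ (p.1 : ℕ))
    (hAind : LinearIndependent F A)
    (l : Fin m) (a b c : Fin r)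
    (hab : a ≠ b) (hac : a ≠ c) (hbc : b ≠ c)
    (habc : (a : ℕ) + (b : ℕ) = 2 * (c : ℕ))
    (M : Matrix (Fin m × Fin r) (Fin m × Fin r) F)
    (hM : M = fun p p' =>
      if (p = (l, a) ∧ p' = (l, b)) ∨ (p = (l, b) ∧ p' = (l, a)) then 1
      else if p = (l, c) ∧ p' = (l, c) then (-2 : F) else 0) :
    M ∈ Cmat A ∧ M.rank = 3 := by
  set u : Fin m × Fin r := (l, a) with hu
  set v : Fin m × Fin r := (l, b) with hv
  set w : Fin m × Fin r := (l, c) with hw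
  have huv : u ≠ v := fun h => hab (congrArg Prod.snd h)
  have huw : u ≠ w := fun h => hac (congrArg Prod.snd h)
  have hvw : v ≠ w := fun h => hbc (congrArg Prod.snd h)
  -- entrywise description of M
  have h1 : M u v = 1 := by rw [hM]; simp
  have h1' : M v u = 1 := by rw [hM]; simp
  have h3 : M w w = -2 := by
    rw [hM]
    simp [Ne.symm huw, Ne.symm hvw]
  have h0 : ∀ i j, ¬((i = u ∧ j = v) ∨ (i = v ∧ j = u) ∨ (i = w ∧ j = w)) → M i j = 0 := by
    intro i j hc
    rw [hM]
    simp only []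
    rw [if_neg (fun h => hc (by tauto)), if_neg (fun h => hc (by tauto))]
  -- 2 ≠ 0 in F
  obtain ⟨p, e, hp, hodd, he, hqe⟩ := hq
  have h2 : (2 : F) ≠ 0 := by
    have hcard : Fintype.card F = p ^ (e * m) := by rw [hF, hqe, pow_mul]
    have hodd' : Fintype.card F % 2 = 1 := by
      rw [hcard, Nat.odd_iff.mp (hodd.pow)]
    have hchar : ringChar F ≠ 2 := by
      intro h
      have := (FiniteField.even_card_iff_char_two (F := F)).mp h
      omega
    intro h20
    have hdvd : ringChar F ∣ 2 :=
      (CharP.cast_eq_zero_iff F (ringChar F) 2).mp (by exact_mod_cast h20)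
    have hprime : (ringChar F).Prime := CharP.char_is_prime F (ringChar F)
    exact hchar ((Nat.prime_dvd_prime_iff_eq hprime Nat.prime_two).mp hdvd)
  -- key Schur identity
  have hschur : schur (A u) (A v) = schur (A w) (A w) := by
    funext t
    simp only [hA, schur, hu, hv, hw]
    rw [← mul_pow, ← mul_pow]
    congr 1
    have hh : x t ^ (a : ℕ) * y t * (x t ^ (b : ℕ) * y t)
        = x t ^ ((a : ℕ) + (b : ℕ)) * (y t * y t) := by rw [pow_add]; ring
    rw [hh, habc, two_mul, pow_add]; ring
  exact ⟨mem_Cmat_aux A u v w huv huw hvw hschur M h1 h1' h3 h0,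
    rank_aux u v w huv huw hvw h2 M h1 h1' h3 h0⟩
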